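/- The graph W̄ is a forest with exactly three connected components: its vertex set is the disjoint union of the parity classes W₀, W₁, W₂, there are no edges between distinct classes, and for each i ∈ {0,1,2} the induced subgraph W̄ᵢ is a tree (connected and acyclic). -/

import Mathlib

/-- The type of normalized primitive pairs: coprime `(p,q)` with `q > 0`, or `q = 0`
and `p = 1`. -/
def NPP : Type :=
  {v : ℤ × ℤ // IsCoprime v.1 v.2 ∧ (0 < v.2 ∨ (v.2 = 0 ∧ v.1 = 1))}

/-- The graph `W̄`: vertices are normalized primitive pairs, and `(p₁,q₁)`, `(p₂,q₂)` are
adjacent iff `|p₁q₂ − p₂q₁| = 2`. -/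
def Wbar : SimpleGraph NPP where
  Adj u v := |u.1.1 * v.1.2 - v.1.1 * u.1.2| = 2
  symm := by
    constructor
    intro u v h
    rw [abs_sub_comm]
    exact h
  loopless := by
    constructor
    intro v h
    rw [sub_self, abs_zero] at h
    exact absurd h (by norm_num)

/-- The parity class `W₀ = {(p,q) : p and q both odd}`. -/
def W0 : Set NPP := {v | Odd v.1.1 ∧ Odd v.1.2}

/-- The parity class `W₁ = {(p,q) : q even}`. -/
def W1 : Set NPP := {v | Even v.1.2}

/-- The parity class `W₂ = {(p,q) : p even}`. -/
def W2 : Set NPP := {v | Even v.1.1}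

lemma not_both_even {p q : ℤ} (h : IsCoprime p q) (hp : Even p) (hq : Even q) : False := by
  obtain ⟨a, b, hab⟩ := h
  have : Even (a * p + b * q) := (hp.mul_left a).add (hq.mul_left b)
  rw [hab] at this
  have := Int.even_iff.mp this
  omega

lemma part1 (v : NPP) :
    (v ∈ W0 ∧ v ∉ W1 ∧ v ∉ W2) ∨ (v ∈ W1 ∧ v ∉ W0 ∧ v ∉ W2) ∨
      (v ∈ W2 ∧ v ∉ W0 ∧ v ∉ W1) := by
  have hcop := v.2.1
  have hne := not_both_even hcop
  simp only [W0, W1, W2, Set.mem_setOf_eq]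
  rcases Int.even_or_odd v.1.1 with hp | hp <;> rcases Int.even_or_odd v.1.2 with hq | hq
  · exact absurd hq (by intro h; exact hne hp h)
  · refine Or.inr (Or.inr ⟨hp, ?_, ?_⟩)
    · rintro ⟨h1, -⟩; exact (Int.not_even_iff_odd.mpr h1) hp
    · intro h; exact (Int.not_even_iff_odd.mpr hq) h
  · refine Or.inr (Or.inl ⟨hq, ?_, ?_⟩)
    · rintro ⟨-, h2⟩; exact (Int.not_even_iff_odd.mpr h2) hq
    · intro h; exact (Int.not_even_iff_odd.mpr hp) h
  · refine Or.inl ⟨⟨hp, hq⟩, ?_, ?_⟩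
    · intro h; exact (Int.not_even_iff_odd.mpr hq) h
    · intro h; exact (Int.not_even_iff_odd.mpr hp) h

lemma adj_even_sub {u v : NPP} (h : Wbar.Adj u v) :
    Even (u.1.1 * v.1.2 - v.1.1 * u.1.2) := by
  have h' : |u.1.1 * v.1.2 - v.1.1 * u.1.2| = 2 := h
  rcases (abs_eq (by norm_num : (0:ℤ) ≤ 2)).mp h' with h'' | h''
  · exact ⟨1, by omega⟩
  · exact ⟨-1, by omega⟩

lemma part2 (u v : NPP) (h : Wbar.Adj u v) :
    (u ∈ W0 ∧ v ∈ W0) ∨ (u ∈ W1 ∧ v ∈ W1) ∨ (u ∈ W2 ∧ v ∈ W2) := by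
  have key : ∀ a b : NPP, Wbar.Adj a b → a ∈ W0 → b ∈ W1 → False := by
    intro a b hab ⟨hp1, hq1⟩ hq2
    have hev := adj_even_sub hab
    have hx : Even (a.1.1 * b.1.2) := hq2.mul_left _
    have hy : Even (b.1.1 * a.1.2) := by
      have := (Int.even_sub.mp hev).mp hx
      exact this
    rcases Int.even_mul.mp hy with h' | h'
    · exact not_both_even b.2.1 h' hq2
    · exact (Int.not_even_iff_odd.mpr hq1) h'
  have key2 : ∀ a b : NPP, Wbar.Adj a b → a ∈ W0 → b ∈ W2 → False := by
    intro a b hab ⟨hp1, hq1⟩ hp2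
    have hev := adj_even_sub hab
    have hy : Even (b.1.1 * a.1.2) := hp2.mul_right _
    have hx : Even (a.1.1 * b.1.2) := (Int.even_sub.mp hev).mpr hy
    rcases Int.even_mul.mp hx with h' | h'
    · exact (Int.not_even_iff_odd.mpr hp1) h'
    · exact not_both_even b.2.1 hp2 h'
  have key3 : ∀ a b : NPP, Wbar.Adj a b → a ∈ W1 → b ∈ W2 → False := by
    intro a b hab hq1 hp2
    have hev := adj_even_sub hab
    have hy : Even (b.1.1 * a.1.2) := hp2.mul_right _
    have hx : Even (a.1.1 * b.1.2) := (Int.even_sub.mp hev).mpr hy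
    rcases Int.even_mul.mp hx with h' | h'
    · exact not_both_even a.2.1 h' hq1
    · exact not_both_even b.2.1 hp2 h'
  rcases part1 u with ⟨hu, -, -⟩ | ⟨hu, -, -⟩ | ⟨hu, -, -⟩ <;>
    rcases part1 v with ⟨hv, -, -⟩ | ⟨hv, -, -⟩ | ⟨hv, -, -⟩
  · exact Or.inl ⟨hu, hv⟩
  · exact absurd (key u v h hu hv) (by simp)
  · exact absurd (key2 u v h hu hv) (by simp)
  · exact absurd (key v u h.symm hv hu) (by simp)
  · exact Or.inr (Or.inl ⟨hu, hv⟩)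
  · exact absurd (key3 u v h hu hv) (by simp)
  · exact absurd (key2 v u h.symm hv hu) (by simp)
  · exact absurd (key3 v u h.symm hv hu) (by simp)
  · exact Or.inr (Or.inr ⟨hu, hv⟩)

lemma dvd_small_zero {q x : ℤ} (h : q ∣ x) (h1 : -q < x) (h2 : x < q) : x = 0 := by
  have hq : 0 < q := by linarith
  obtain ⟨k, rfl⟩ := h
  rcases lt_trichotomy k 0 with hk | hk | hk
  · nlinarith [mul_nonneg hq.le (by linarith : (0:ℤ) ≤ -k)]
  · simp [hk]
  · nlinarith [mul_nonneg hq.le (by linarith : (0:ℤ) ≤ k - 1)]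

lemma dvd_small_cases {q x : ℤ} (hq : 0 < q) (h : q ∣ x) (h1 : 0 ≤ x) (h2 : x < 2*q) :
    x = 0 ∨ x = q := by
  obtain ⟨k, rfl⟩ := h
  rcases lt_trichotomy k 0 with hk | hk | hk
  · exfalso; nlinarith [mul_nonneg hq.le (by linarith : (0:ℤ) ≤ -k)]
  · left; simp [hk]
  · rcases lt_trichotomy k 1 with hk1 | hk1 | hk1
    · omega
    · right; simp [hk1]
    · exfalso; nlinarith [mul_nonneg hq.le (by linarith : (0:ℤ) ≤ k - 2)]

lemma odd_of_coprime_even {p q : ℤ} (h : IsCoprime p q) (hq : Even q) : Odd p := by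
  rw [← Int.not_even_iff_odd]
  intro hp
  obtain ⟨a, b, hab⟩ := h
  have : Even (a * p + b * q) := (hp.mul_left a).add (hq.mul_left b)
  rw [hab] at this
  have := Int.even_iff.mp this
  omega

lemma coprime_of_rel {p q r s : ℤ} (h : p * s - r * q = 2 ∨ p * s - r * q = -2)
    (hodd : Odd r ∨ Odd s) : IsCoprime r s := by
  rw [Int.isCoprime_iff_gcd_eq_one]
  have hr : (↑(Int.gcd r s) : ℤ) ∣ r := Int.gcd_dvd_left r s
  have hs : (↑(Int.gcd r s) : ℤ) ∣ s := Int.gcd_dvd_right r s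
  have hd2 : (↑(Int.gcd r s) : ℤ) ∣ 2 := by
    have : (↑(Int.gcd r s) : ℤ) ∣ p * s - r * q :=
      dvd_sub (hs.mul_left p) (hr.mul_right q)
    rcases h with h | h <;> rw [h] at this
    · exact this
    · exact dvd_neg.mp this
  have hd2' : Int.gcd r s ∣ 2 := by exact_mod_cast hd2
  rcases (Nat.dvd_prime Nat.prime_two).mp hd2' with h1 | h1
  · exact h1
  · exfalso
    rw [h1] at hr hs
    rcases hodd with ho | ho
    · obtain ⟨t, ht⟩ := hr
      have := Int.odd_iff.mp ho
      omega
    · obtain ⟨t, ht⟩ := hs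
      have := Int.odd_iff.mp ho
      omega

lemma exists_sol {p q : ℤ} (hq : 0 < q) (hcop : IsCoprime p q) :
    ∃ r s : ℤ, p * s - r * q = 2 ∧ 0 ≤ s ∧ s < q ∧ (Even q → Even s) := by
  obtain ⟨a, b, hab⟩ := hcop
  set s := (2 * a) % q with hs
  set k := (2 * a) / q with hk
  have hmod : q * k + s = 2 * a := Int.mul_ediv_add_emod (2 * a) q
  refine ⟨-(2 * b + p * k), s, by linear_combination 2 * hab + p * hmod,
    Int.emod_nonneg _ hq.ne', Int.emod_lt_of_pos _ hq, ?_⟩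
  intro hqe
  obtain ⟨q', hq'⟩ := hqe
  exact ⟨a - q' * k, by linear_combination hmod - k * hq'⟩

lemma core_uniq {p q r₁ s₁ r₂ s₂ : ℤ} (hcop : IsCoprime p q)
    (h1 : p * s₁ - r₁ * q = 2 ∨ p * s₁ - r₁ * q = -2)
    (h2 : p * s₂ - r₂ * q = 2 ∨ p * s₂ - r₂ * q = -2)
    (hs1 : 0 ≤ s₁) (h1q : s₁ < q) (hs2 : 0 ≤ s₂) (h2q : s₂ < q) :
    (s₁ = s₂ ∧ r₁ = r₂) ∨ (s₁ = 0 ∧ s₂ = 0) ∨ (s₁ + s₂ = q ∧ r₁ + r₂ = p) := by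
  have hq : 0 < q := lt_of_le_of_lt hs1 h1q
  have same : p * s₁ - r₁ * q = p * s₂ - r₂ * q → s₁ = s₂ ∧ r₁ = r₂ := by
    intro h
    have hdvd : q ∣ p * (s₁ - s₂) := ⟨r₁ - r₂, by linear_combination h⟩
    have hd : q ∣ s₁ - s₂ := (hcop.symm).dvd_of_dvd_mul_left hdvd
    have hss : s₁ = s₂ := by
      have := dvd_small_zero hd (by omega) (by omega)
      omega
    refine ⟨hss, ?_⟩
    subst hss
    have : (r₁ - r₂) * q = 0 := by linear_combination -h
    rcases mul_eq_zero.mp this with h' | h'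
    · omega
    · omega
  have opp : ∀ a₁ b₁ a₂ b₂ : ℤ, 0 ≤ b₁ → b₁ < q → 0 ≤ b₂ → b₂ < q →
      p * b₁ - a₁ * q = 2 → p * b₂ - a₂ * q = -2 →
      (b₁ = 0 ∧ b₂ = 0) ∨ (b₁ + b₂ = q ∧ a₁ + a₂ = p) := by
    intro a₁ b₁ a₂ b₂ hb1 hb1q hb2 hb2q ha hb
    have hdvd : q ∣ p * (b₁ + b₂) := ⟨a₁ + a₂, by linear_combination ha + hb⟩
    have hd : q ∣ b₁ + b₂ := (hcop.symm).dvd_of_dvd_mul_left hdvd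
    rcases dvd_small_cases hq hd (by omega) (by omega) with h' | h'
    · left; omega
    · right
      refine ⟨h', ?_⟩
      have : (p - (a₁ + a₂)) * q = 0 := by linear_combination ha + hb - p * h'
      rcases mul_eq_zero.mp this with h'' | h''
      · omega
      · omega
  rcases h1 with h1 | h1 <;> rcases h2 with h2 | h2
  · exact Or.inl (same (by omega))
  · exact Or.inr (opp r₁ s₁ r₂ s₂ hs1 h1q hs2 h2q h1 h2)
  · rcases opp r₂ s₂ r₁ s₁ hs2 h2q hs1 h1q h2 h1 with h | h
    · exact Or.inr (Or.inl ⟨h.2, h.1⟩)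
    · exact Or.inr (Or.inr ⟨by omega, by omega⟩)
  · exact Or.inl (same (by omega))

open SimpleGraph in

lemma tree_of_rank {V : Type*} (G : SimpleGraph V) {α : Type*} [LinearOrder α]
    [WellFoundedLT α] (f : V → α) (r : V)
    (hne : ∀ u v : V, G.Adj u v → f u ≠ f v)
    (hpar : ∀ v : V, v ≠ r → ∃ u, G.Adj v u ∧ f u < f v)
    (huniq : ∀ v u w : V, G.Adj v u → G.Adj v w → f u < f v → f w < f v → u = w) :
    G.Connected ∧ G.IsAcyclic := by
  constructor
  · have key : ∀ a : α, ∀ v : V, f v = a → G.Reachable r v := by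
      intro a
      induction a using WellFoundedLT.induction with
      | ind a ih =>
        intro v hv
        by_cases hvr : v = r
        · rw [hvr]
        · obtain ⟨u, hadj, hlt⟩ := hpar v hvr
          exact (ih (f u) (hv ▸ hlt) u rfl).trans hadj.symm.reachable
    exact (connected_iff_exists_forall_reachable G).mpr ⟨r, fun v => key (f v) v rfl⟩
  · intro x c hc
    classical
    -- find max vertex
    have hsup : x ∈ c.support := Walk.start_mem_support c
    obtain ⟨m, hm, hmax⟩ := Finset.exists_max_image c.support.toFinset f
      ⟨x, List.mem_toFinset.mpr hsup⟩
    have hm' : m ∈ c.support := List.mem_toFinset.mp hm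
    have hmax' : ∀ y ∈ c.support, f y ≤ f m := fun y hy =>
      hmax y (List.mem_toFinset.mpr hy)
    set c' := c.rotate m hm' with hc'def
    have hc' : c'.IsCycle := hc.rotate hm'
    have hmemc' : ∀ y, y ∈ c'.support → y ∈ c.support := by
      intro y hy
      rw [c'.support_eq_cons] at hy
      rcases hy with _ | hy
      · exact hm'
      · exact List.mem_of_mem_tail
          (((Walk.support_rotate c m hm').mem_iff).mp (by assumption))
    clear_value c'
    cases c' with
    | nil => exact hc'.ne_nil rfl
    | @cons _ u _ hadj p =>
      -- second neighbor from the end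
      have hmu : m ≠ u := hadj.ne
      cases hrev : p.reverse with
      | nil => exact absurd rfl hmu
      | @cons _ w _ hadj2 p2 =>
        -- hadj2 : G.Adj m w
        have hw_mem : w ∈ c.support := by
          apply hmemc'
          rw [Walk.support_cons]
          right
          have : w ∈ p.reverse.support := by rw [hrev]; simp [Walk.support_cons]
          rwa [Walk.support_reverse, List.mem_reverse] at this
        have hu_mem : u ∈ c.support := by
          apply hmemc'
          rw [Walk.support_cons]
          right
          exact p.start_mem_support
        have huw : u ≠ w := by
          intro h
          subst h
          have hedge : s(m, u) ∈ p.edges := by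
            have : s(m, u) ∈ p.reverse.edges := by rw [hrev]; simp [Walk.edges_cons]
            rwa [Walk.edges_reverse, List.mem_reverse] at this
          have hnodup := hc'.edges_nodup
          rw [Walk.edges_cons] at hnodup
          exact (List.nodup_cons.mp hnodup).1 hedge
        have h1 : f u < f m := lt_of_le_of_ne (hmax' u hu_mem) (hne m u hadj).symm
        have h2 : f w < f m := lt_of_le_of_ne (hmax' w hw_mem) (hne m w hadj2).symm
        exact huw (huniq m u w hadj hadj2 h1 h2)

open SimpleGraph in
lemma W1_tree : (SimpleGraph.induce W1 Wbar).Connected ∧ (SimpleGraph.induce W1 Wbar).IsAcyclic := by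
  set root : ↥W1 := ⟨⟨(1, 0), isCoprime_one_left, Or.inr ⟨rfl, rfl⟩⟩, Even.zero⟩ with hroot
  have qnn : ∀ v : ↥W1, 0 ≤ v.1.1.2 := by
    rintro ⟨⟨⟨p, q⟩, hcop, h0 | ⟨h0, h1⟩⟩, hm⟩ <;> simp_all <;> omega
  have qodd : ∀ v : ↥W1, v.1.1.2 % 2 = 0 := fun v => Int.even_iff.mp v.2
  have podd : ∀ v : ↥W1, v.1.1.1 % 2 = 1 :=
    fun v => Int.odd_iff.mp (odd_of_coprime_even v.1.2.1 v.2)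
  have hadj_eq : ∀ u v : ↥W1, (SimpleGraph.induce W1 Wbar).Adj u v →
      |u.1.1.1 * v.1.1.2 - v.1.1.1 * u.1.1.2| = 2 := fun u v h => h
  apply tree_of_rank _ (fun v : ↥W1 => v.1.1.2.toNat) root
  · -- hne
    intro u v hadj heq
    have heq' : u.1.1.2.toNat = v.1.1.2.toNat := heq
    clear heq
    have hq : u.1.1.2 = v.1.1.2 := by have := qnn u; have := qnn v; omega
    rcases (abs_eq (by norm_num : (0:ℤ) ≤ 2)).mp (hadj_eq u v hadj) with h | h <;>
    · rw [hq] at h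
      have h2 : (u.1.1.1 - v.1.1.1) * v.1.1.2 = 2 ∨ (u.1.1.1 - v.1.1.1) * v.1.1.2 = -2 := by
        first | (left; linear_combination h) | (right; linear_combination h)
      obtain ⟨x, hx⟩ : Even (u.1.1.1 - v.1.1.1) := by
        have := podd u; have := podd v; exact Int.even_iff.mpr (by omega)
      obtain ⟨y, hy⟩ : Even (v.1.1.2) := v.2
      have h4 : (4:ℤ) ∣ 2 ∨ (4:ℤ) ∣ -2 := by
        rcases h2 with h2 | h2
        · exact Or.inl ⟨x * y, by
            linear_combination -h2 + (y + y) * hx + (u.1.1.1 - v.1.1.1) * hy⟩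
        · exact Or.inr ⟨x * y, by
            linear_combination -h2 + (y + y) * hx + (u.1.1.1 - v.1.1.1) * hy⟩
      rcases h4 with h4 | h4 <;> omega
  · -- hpar
    intro v hvr
    have hcop := v.1.2.1
    have hq2 : 2 ≤ v.1.1.2 := by
      have h0 : v.1.1.2 ≠ 0 := by
        intro h0
        rcases v.1.2.2 with h | ⟨-, h1⟩
        · omega
        · apply hvr
          apply Subtype.ext; apply Subtype.ext
          exact Prod.ext h1 h0
      have := qnn v; have := qodd v; omega
    obtain ⟨r₀, s₀, heq, hs0, hsq, hse⟩ := exists_sol (by omega) hcop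
    have hs₀e : s₀ % 2 = 0 := Int.even_iff.mp (hse v.2)
    by_cases hz : s₀ = 0
    · have hdvd : v.1.1.2 ∣ 2 := ⟨-r₀, by linear_combination -heq + v.1.1.1 * hz⟩
      have hq2' : v.1.1.2 = 2 := by
        have := Int.le_of_dvd (by norm_num) hdvd; omega
      refine ⟨root, ?_, ?_⟩
      · show |v.1.1.1 * (0:ℤ) - 1 * v.1.1.2| = 2
        rw [hq2']; norm_num
      · show (0:ℤ).toNat < v.1.1.2.toNat; omega
    · by_cases hro : r₀ % 2 = 1
      · refine ⟨⟨⟨(r₀, s₀), coprime_of_rel (Or.inl heq) (Or.inl (Int.odd_iff.mpr hro)),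
          Or.inl (by omega)⟩, Int.even_iff.mpr hs₀e⟩, ?_, ?_⟩
        · show |v.1.1.1 * s₀ - r₀ * v.1.1.2| = 2
          rw [heq]; norm_num
        · simp only; omega
      · have heq2 : v.1.1.1 * (v.1.1.2 - s₀) - (v.1.1.1 - r₀) * v.1.1.2 = -2 := by
          linear_combination -heq
        have hodd : Odd (v.1.1.1 - r₀) := by
          have := podd v; exact Int.odd_iff.mpr (by omega)
        refine ⟨⟨⟨(v.1.1.1 - r₀, v.1.1.2 - s₀),
          coprime_of_rel (Or.inr heq2) (Or.inl hodd), Or.inl (by omega)⟩,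
          (Int.even_iff.mpr (by have := qodd v; omega) :
            Even (v.1.1.2 - s₀))⟩, ?_, ?_⟩
        · show |v.1.1.1 * (v.1.1.2 - s₀) - (v.1.1.1 - r₀) * v.1.1.2| = 2
          rw [heq2]; norm_num
        · simp only; omega
  · -- huniq
    intro v u w hadjU hadjW hfu hfw
    have hfu' : u.1.1.2.toNat < v.1.1.2.toNat := hfu
    have hfw' : w.1.1.2.toNat < v.1.1.2.toNat := hfw
    have hub : u.1.1.2 < v.1.1.2 := by have := qnn u; have := qnn v; omega
    have hwb : w.1.1.2 < v.1.1.2 := by have := qnn w; omega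
    have d1 := (abs_eq (by norm_num : (0:ℤ) ≤ 2)).mp (hadj_eq v u hadjU)
    have d2 := (abs_eq (by norm_num : (0:ℤ) ≤ 2)).mp (hadj_eq v w hadjW)
    rcases core_uniq v.1.2.1 d1 d2 (qnn u) hub (qnn w) hwb with
      ⟨hs, hr⟩ | ⟨h1, h2⟩ | ⟨hsum, hrsum⟩
    · apply Subtype.ext; apply Subtype.ext; exact Prod.ext hr hs
    · have hu1 : u.1.1.1 = 1 := by
        rcases u.1.2.2 with h | ⟨-, h⟩
        · omega
        · exact h
      have hw1 : w.1.1.1 = 1 := by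
        rcases w.1.2.2 with h | ⟨-, h⟩
        · omega
        · exact h
      apply Subtype.ext; apply Subtype.ext
      exact Prod.ext (by rw [hu1, hw1]) (by rw [h1, h2])
    · exfalso
      have := podd u; have := podd w; have := podd v
      omega


open SimpleGraph in
lemma W2_tree : (SimpleGraph.induce W2 Wbar).Connected ∧ (SimpleGraph.induce W2 Wbar).IsAcyclic := by
  set root : ↥W2 := ⟨⟨(0, 1), isCoprime_zero_left.mpr isUnit_one, Or.inl one_pos⟩,
    Even.zero⟩ with hroot
  have qpos : ∀ v : ↥W2, 0 < v.1.1.2 := by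
    rintro ⟨⟨⟨p, q⟩, hcop, h0 | ⟨h0, h1⟩⟩, hm⟩
    · exact h0
    · exfalso
      have he : Even (p, q).1 := hm
      rw [h1] at he
      have := Int.even_iff.mp he
      omega
  have peven : ∀ v : ↥W2, v.1.1.1 % 2 = 0 := fun v => Int.even_iff.mp v.2
  have qodd : ∀ v : ↥W2, v.1.1.2 % 2 = 1 :=
    fun v => Int.odd_iff.mp (odd_of_coprime_even v.1.2.1.symm v.2)
  have hadj_eq : ∀ u v : ↥W2, (SimpleGraph.induce W2 Wbar).Adj u v →
      |u.1.1.1 * v.1.1.2 - v.1.1.1 * u.1.1.2| = 2 := fun u v h => h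
  apply tree_of_rank _ (fun v : ↥W2 => toLex (v.1.1.2.toNat, v.1.1.1.natAbs)) root
  · -- hne
    intro u v hadj heq
    have h1 : u.1.1.2.toNat = v.1.1.2.toNat :=
      congrArg (fun x : ℕ ×ₗ ℕ => (ofLex x).1) heq
    have h2 : u.1.1.1.natAbs = v.1.1.1.natAbs :=
      congrArg (fun x : ℕ ×ₗ ℕ => (ofLex x).2) heq
    have hq : u.1.1.2 = v.1.1.2 := by have := qpos u; have := qpos v; omega
    rcases (abs_eq (by norm_num : (0:ℤ) ≤ 2)).mp (hadj_eq u v hadj) with h | h <;>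
    · rw [hq] at h
      have hdvd : v.1.1.2 ∣ 2 := by
        first
        | exact ⟨u.1.1.1 - v.1.1.1, by linear_combination -h⟩
        | exact ⟨v.1.1.1 - u.1.1.1, by linear_combination h⟩
      have hle := Int.le_of_dvd (by norm_num) hdvd
      have hq1 : v.1.1.2 = 1 := by have := qodd v; have := qpos v; omega
      rw [hq1] at h
      have := peven u; have := peven v
      omega
  · -- hpar
    intro v hvr
    have hcop := v.1.2.1
    have hqp := qpos v
    by_cases hq1 : v.1.1.2 = 1
    · have hp0 : v.1.1.1 ≠ 0 := by
        intro h
        exact hvr (Subtype.ext (Subtype.ext (Prod.ext h hq1)))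
      by_cases hpp : 0 < v.1.1.1
      · refine ⟨⟨⟨(v.1.1.1 - 2, 1), isCoprime_one_right, Or.inl one_pos⟩,
          (Int.even_iff.mpr (by have := peven v; omega) : Even (v.1.1.1 - 2))⟩, ?_, ?_⟩
        · show |v.1.1.1 * 1 - (v.1.1.1 - 2) * v.1.1.2| = 2
          rw [hq1]
          have e : v.1.1.1 * (1:ℤ) - (v.1.1.1 - 2) * 1 = 2 := by ring
          rw [e]; norm_num
        · show toLex ((1:ℤ).toNat, (v.1.1.1 - 2).natAbs) <
            toLex (v.1.1.2.toNat, v.1.1.1.natAbs)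
          rw [Prod.Lex.lt_iff]
          simp only [ofLex_toLex]
          have := peven v
          omega
      · refine ⟨⟨⟨(v.1.1.1 + 2, 1), isCoprime_one_right, Or.inl one_pos⟩,
          (Int.even_iff.mpr (by have := peven v; omega) : Even (v.1.1.1 + 2))⟩, ?_, ?_⟩
        · show |v.1.1.1 * 1 - (v.1.1.1 + 2) * v.1.1.2| = 2
          rw [hq1]
          have e : v.1.1.1 * (1:ℤ) - (v.1.1.1 + 2) * 1 = -2 := by ring
          rw [e]; norm_num
        · show toLex ((1:ℤ).toNat, (v.1.1.1 + 2).natAbs) <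
            toLex (v.1.1.2.toNat, v.1.1.1.natAbs)
          rw [Prod.Lex.lt_iff]
          simp only [ofLex_toLex]
          have := peven v
          omega
    · have hq3 : 3 ≤ v.1.1.2 := by have := qodd v; omega
      obtain ⟨r₀, s₀, heq, hs0, hsq, -⟩ := exists_sol (by omega) hcop
      have hsnz : s₀ ≠ 0 := by
        intro h
        have hdvd : v.1.1.2 ∣ 2 := ⟨-r₀, by linear_combination -heq + v.1.1.1 * h⟩
        have := Int.le_of_dvd (by norm_num) hdvd
        omega
      by_cases hso : s₀ % 2 = 1
      · have hps : Even (v.1.1.1 * s₀) := v.2.mul_right _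
        obtain ⟨t, ht⟩ := hps
        have hrq : Even (r₀ * v.1.1.2) := ⟨t - 1, by linear_combination -heq + ht⟩
        have hre : Even r₀ := by
          rcases Int.even_mul.mp hrq with he | he
          · exact he
          · exact absurd (Int.even_iff.mp he) (by have := qodd v; omega)
        refine ⟨⟨⟨(r₀, s₀), coprime_of_rel (Or.inl heq) (Or.inr (Int.odd_iff.mpr hso)),
          Or.inl (by omega)⟩, hre⟩, ?_, ?_⟩
        · show |v.1.1.1 * s₀ - r₀ * v.1.1.2| = 2
          rw [heq]; norm_num
        · show toLex (s₀.toNat, r₀.natAbs) < toLex (v.1.1.2.toNat, v.1.1.1.natAbs)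
          rw [Prod.Lex.lt_iff]
          simp only [ofLex_toLex]
          omega
      · have heq2 : v.1.1.1 * (v.1.1.2 - s₀) - (v.1.1.1 - r₀) * v.1.1.2 = -2 := by
          linear_combination -heq
        have hps : Even (v.1.1.1 * (v.1.1.2 - s₀)) := v.2.mul_right _
        obtain ⟨t, ht⟩ := hps
        have hrq : Even ((v.1.1.1 - r₀) * v.1.1.2) := ⟨t + 1, by linear_combination -heq2 + ht⟩
        have hre : Even (v.1.1.1 - r₀) := by
          rcases Int.even_mul.mp hrq with he | he
          · exact he
          · exact absurd (Int.even_iff.mp he) (by have := qodd v; omega)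
        have hsodd : Odd (v.1.1.2 - s₀) := Int.odd_iff.mpr (by have := qodd v; omega)
        refine ⟨⟨⟨(v.1.1.1 - r₀, v.1.1.2 - s₀), coprime_of_rel (Or.inr heq2) (Or.inr hsodd),
          Or.inl (by omega)⟩, hre⟩, ?_, ?_⟩
        · show |v.1.1.1 * (v.1.1.2 - s₀) - (v.1.1.1 - r₀) * v.1.1.2| = 2
          rw [heq2]; norm_num
        · show toLex ((v.1.1.2 - s₀).toNat, (v.1.1.1 - r₀).natAbs) <
            toLex (v.1.1.2.toNat, v.1.1.1.natAbs)
          rw [Prod.Lex.lt_iff]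
          simp only [ofLex_toLex]
          omega
  · -- huniq
    intro v u w hadjU hadjW hfu hfw
    have hfu' : toLex (u.1.1.2.toNat, u.1.1.1.natAbs) <
        toLex (v.1.1.2.toNat, v.1.1.1.natAbs) := hfu
    have hfw' : toLex (w.1.1.2.toNat, w.1.1.1.natAbs) <
        toLex (v.1.1.2.toNat, v.1.1.1.natAbs) := hfw
    rw [Prod.Lex.lt_iff] at hfu' hfw'
    simp only [ofLex_toLex] at hfu' hfw'
    have d1 := (abs_eq (by norm_num : (0:ℤ) ≤ 2)).mp (hadj_eq v u hadjU)
    have d2 := (abs_eq (by norm_num : (0:ℤ) ≤ 2)).mp (hadj_eq v w hadjW)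
    have hqeqdvd : ∀ z : ↥W2, v.1.1.1 * z.1.1.2 - z.1.1.1 * v.1.1.2 = 2 ∨
        v.1.1.1 * z.1.1.2 - z.1.1.1 * v.1.1.2 = -2 → z.1.1.2 = v.1.1.2 → v.1.1.2 ∣ 2 := by
      intro z hd hz
      rw [hz] at hd
      rcases hd with hd | hd
      · exact ⟨v.1.1.1 - z.1.1.1, by linear_combination -hd⟩
      · exact ⟨z.1.1.1 - v.1.1.1, by linear_combination hd⟩
    by_cases hq1 : v.1.1.2 = 1
    · -- row case
      have hp0 : v.1.1.1 ≠ 0 := by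
        intro h
        have hvr : v = root := Subtype.ext (Subtype.ext (Prod.ext h hq1))
        subst hvr
        rcases hfu' with h' | ⟨-, h'⟩
        · have := qpos u; simp at h'; omega
        · simp [h] at h'
      have hu1 : u.1.1.2 = 1 := by
        have := qpos u
        rcases hfu' with h' | ⟨h', -⟩ <;> omega
      have hw1 : w.1.1.2 = 1 := by
        have := qpos w
        rcases hfw' with h' | ⟨h', -⟩ <;> omega
      have hua : u.1.1.1.natAbs < v.1.1.1.natAbs := by
        rcases hfu' with h' | ⟨-, h'⟩
        · have := qpos u; omega
        · exact h'
      have hwa : w.1.1.1.natAbs < v.1.1.1.natAbs := by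
        rcases hfw' with h' | ⟨-, h'⟩
        · have := qpos w; omega
        · exact h'
      rw [hq1, hu1] at d1
      rw [hq1, hw1] at d2
      have hpu : u.1.1.1 = w.1.1.1 := by omega
      exact Subtype.ext (Subtype.ext (Prod.ext hpu (by rw [hu1, hw1])))
    · have hq3 : 3 ≤ v.1.1.2 := by have := qodd v; have := qpos v; omega
      have hult : u.1.1.2 < v.1.1.2 := by
        rcases hfu' with h' | ⟨h', -⟩
        · have := qpos u; have := qpos v; omega
        · exfalso
          have hz : u.1.1.2 = v.1.1.2 := by have := qpos u; have := qpos v; omega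
          have := Int.le_of_dvd (by norm_num) (hqeqdvd u d1 hz)
          omega
      have hwlt : w.1.1.2 < v.1.1.2 := by
        rcases hfw' with h' | ⟨h', -⟩
        · have := qpos w; have := qpos v; omega
        · exfalso
          have hz : w.1.1.2 = v.1.1.2 := by have := qpos w; have := qpos v; omega
          have := Int.le_of_dvd (by norm_num) (hqeqdvd w d2 hz)
          omega
      rcases core_uniq v.1.2.1 d1 d2 (qpos u).le hult (qpos w).le hwlt with
        ⟨hs, hr⟩ | ⟨h1, h2⟩ | ⟨hsum, -⟩
      · exact Subtype.ext (Subtype.ext (Prod.ext hr hs))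
      · exact absurd h1 (by have := qpos u; omega)
      · exfalso
        have := qodd u; have := qodd w; have := qodd v
        omega

open SimpleGraph in
lemma W0_tree : (SimpleGraph.induce W0 Wbar).Connected ∧ (SimpleGraph.induce W0 Wbar).IsAcyclic := by
  set root : ↥W0 := ⟨⟨(1, 1), isCoprime_one_left, Or.inl one_pos⟩,
    ⟨odd_one, odd_one⟩⟩ with hroot
  have podd : ∀ v : ↥W0, v.1.1.1 % 2 = 1 := fun v => Int.odd_iff.mp v.2.1
  have qodd : ∀ v : ↥W0, v.1.1.2 % 2 = 1 := fun v => Int.odd_iff.mp v.2.2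
  have qpos : ∀ v : ↥W0, 0 < v.1.1.2 := by
    intro v
    rcases v.1.2.2 with h | ⟨h, -⟩
    · exact h
    · exact absurd (qodd v) (by rw [h]; omega)
  have hadj_eq : ∀ u v : ↥W0, (SimpleGraph.induce W0 Wbar).Adj u v →
      |u.1.1.1 * v.1.1.2 - v.1.1.1 * u.1.1.2| = 2 := fun u v h => h
  apply tree_of_rank _ (fun v : ↥W0 => toLex (v.1.1.2.toNat, (v.1.1.1 - 1).natAbs)) root
  · -- hne
    intro u v hadj heq
    have h1 : u.1.1.2.toNat = v.1.1.2.toNat :=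
      congrArg (fun x : ℕ ×ₗ ℕ => (ofLex x).1) heq
    have h2 : (u.1.1.1 - 1).natAbs = (v.1.1.1 - 1).natAbs :=
      congrArg (fun x : ℕ ×ₗ ℕ => (ofLex x).2) heq
    have hq : u.1.1.2 = v.1.1.2 := by have := qpos u; have := qpos v; omega
    rcases (abs_eq (by norm_num : (0:ℤ) ≤ 2)).mp (hadj_eq u v hadj) with h | h <;>
    · rw [hq] at h
      have hdvd : v.1.1.2 ∣ 2 := by
        first
        | exact ⟨u.1.1.1 - v.1.1.1, by linear_combination -h⟩
        | exact ⟨v.1.1.1 - u.1.1.1, by linear_combination h⟩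
      have hle := Int.le_of_dvd (by norm_num) hdvd
      have hq1 : v.1.1.2 = 1 := by have := qodd v; have := qpos v; omega
      rw [hq1] at h
      have := podd u; have := podd v
      omega
  · -- hpar
    intro v hvr
    have hcop := v.1.2.1
    have hqp := qpos v
    by_cases hq1 : v.1.1.2 = 1
    · have hp1 : v.1.1.1 ≠ 1 := by
        intro h
        exact hvr (Subtype.ext (Subtype.ext (Prod.ext h hq1)))
      by_cases hpp : 1 < v.1.1.1
      · refine ⟨⟨⟨(v.1.1.1 - 2, 1), isCoprime_one_right, Or.inl one_pos⟩,
          (Int.odd_iff.mpr (by have := podd v; omega) : Odd (v.1.1.1 - 2)), odd_one⟩, ?_, ?_⟩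
        · show |v.1.1.1 * 1 - (v.1.1.1 - 2) * v.1.1.2| = 2
          rw [hq1]
          have e : v.1.1.1 * (1:ℤ) - (v.1.1.1 - 2) * 1 = 2 := by ring
          rw [e]; norm_num
        · show toLex ((1:ℤ).toNat, (v.1.1.1 - 2 - 1).natAbs) <
            toLex (v.1.1.2.toNat, (v.1.1.1 - 1).natAbs)
          rw [Prod.Lex.lt_iff]
          simp only [ofLex_toLex]
          have := podd v
          omega
      · refine ⟨⟨⟨(v.1.1.1 + 2, 1), isCoprime_one_right, Or.inl one_pos⟩,
          (Int.odd_iff.mpr (by have := podd v; omega) : Odd (v.1.1.1 + 2)), odd_one⟩, ?_, ?_⟩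
        · show |v.1.1.1 * 1 - (v.1.1.1 + 2) * v.1.1.2| = 2
          rw [hq1]
          have e : v.1.1.1 * (1:ℤ) - (v.1.1.1 + 2) * 1 = -2 := by ring
          rw [e]; norm_num
        · show toLex ((1:ℤ).toNat, (v.1.1.1 + 2 - 1).natAbs) <
            toLex (v.1.1.2.toNat, (v.1.1.1 - 1).natAbs)
          rw [Prod.Lex.lt_iff]
          simp only [ofLex_toLex]
          have := podd v
          omega
    · have hq3 : 3 ≤ v.1.1.2 := by have := qodd v; omega
      obtain ⟨r₀, s₀, heq, hs0, hsq, -⟩ := exists_sol (by omega) hcop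
      have hsnz : s₀ ≠ 0 := by
        intro h
        have hdvd : v.1.1.2 ∣ 2 := ⟨-r₀, by linear_combination -heq + v.1.1.1 * h⟩
        have := Int.le_of_dvd (by norm_num) hdvd
        omega
      by_cases hso : s₀ % 2 = 1
      · have hps : Odd (v.1.1.1 * s₀) := v.2.1.mul (Int.odd_iff.mpr hso)
        obtain ⟨t, ht⟩ := hps
        have hrq : Odd (r₀ * v.1.1.2) := ⟨t - 1, by linear_combination -heq + ht⟩
        have hre : Odd r₀ := (Int.odd_mul.mp hrq).1
        refine ⟨⟨⟨(r₀, s₀), coprime_of_rel (Or.inl heq) (Or.inl hre),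
          Or.inl (by omega)⟩, hre, Int.odd_iff.mpr hso⟩, ?_, ?_⟩
        · show |v.1.1.1 * s₀ - r₀ * v.1.1.2| = 2
          rw [heq]; norm_num
        · show toLex (s₀.toNat, (r₀ - 1).natAbs) <
            toLex (v.1.1.2.toNat, (v.1.1.1 - 1).natAbs)
          rw [Prod.Lex.lt_iff]
          simp only [ofLex_toLex]
          omega
      · have heq2 : v.1.1.1 * (v.1.1.2 - s₀) - (v.1.1.1 - r₀) * v.1.1.2 = -2 := by
          linear_combination -heq
        have hsodd : Odd (v.1.1.2 - s₀) := Int.odd_iff.mpr (by have := qodd v; omega)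
        have hps : Odd (v.1.1.1 * (v.1.1.2 - s₀)) := v.2.1.mul hsodd
        obtain ⟨t, ht⟩ := hps
        have hrq : Odd ((v.1.1.1 - r₀) * v.1.1.2) := ⟨t + 1, by linear_combination -heq2 + ht⟩
        have hre : Odd (v.1.1.1 - r₀) := (Int.odd_mul.mp hrq).1
        refine ⟨⟨⟨(v.1.1.1 - r₀, v.1.1.2 - s₀), coprime_of_rel (Or.inr heq2) (Or.inl hre),
          Or.inl (by omega)⟩, hre, hsodd⟩, ?_, ?_⟩
        · show |v.1.1.1 * (v.1.1.2 - s₀) - (v.1.1.1 - r₀) * v.1.1.2| = 2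
          rw [heq2]; norm_num
        · show toLex ((v.1.1.2 - s₀).toNat, (v.1.1.1 - r₀ - 1).natAbs) <
            toLex (v.1.1.2.toNat, (v.1.1.1 - 1).natAbs)
          rw [Prod.Lex.lt_iff]
          simp only [ofLex_toLex]
          omega
  · -- huniq
    intro v u w hadjU hadjW hfu hfw
    have hfu' : toLex (u.1.1.2.toNat, (u.1.1.1 - 1).natAbs) <
        toLex (v.1.1.2.toNat, (v.1.1.1 - 1).natAbs) := hfu
    have hfw' : toLex (w.1.1.2.toNat, (w.1.1.1 - 1).natAbs) <
        toLex (v.1.1.2.toNat, (v.1.1.1 - 1).natAbs) := hfw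
    rw [Prod.Lex.lt_iff] at hfu' hfw'
    simp only [ofLex_toLex] at hfu' hfw'
    have d1 := (abs_eq (by norm_num : (0:ℤ) ≤ 2)).mp (hadj_eq v u hadjU)
    have d2 := (abs_eq (by norm_num : (0:ℤ) ≤ 2)).mp (hadj_eq v w hadjW)
    have hqeqdvd : ∀ z : ↥W0, v.1.1.1 * z.1.1.2 - z.1.1.1 * v.1.1.2 = 2 ∨
        v.1.1.1 * z.1.1.2 - z.1.1.1 * v.1.1.2 = -2 → z.1.1.2 = v.1.1.2 → v.1.1.2 ∣ 2 := by
      intro z hd hz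
      rw [hz] at hd
      rcases hd with hd | hd
      · exact ⟨v.1.1.1 - z.1.1.1, by linear_combination -hd⟩
      · exact ⟨z.1.1.1 - v.1.1.1, by linear_combination hd⟩
    by_cases hq1 : v.1.1.2 = 1
    · have hp1 : v.1.1.1 ≠ 1 := by
        intro h
        have hvr : v = root := Subtype.ext (Subtype.ext (Prod.ext h hq1))
        subst hvr
        rcases hfu' with h' | ⟨-, h'⟩
        · have := qpos u; simp at h'; omega
        · simp [h] at h'
      have hu1 : u.1.1.2 = 1 := by
        have := qpos u
        rcases hfu' with h' | ⟨h', -⟩ <;> omega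
      have hw1 : w.1.1.2 = 1 := by
        have := qpos w
        rcases hfw' with h' | ⟨h', -⟩ <;> omega
      have hua : (u.1.1.1 - 1).natAbs < (v.1.1.1 - 1).natAbs := by
        rcases hfu' with h' | ⟨-, h'⟩
        · have := qpos u; omega
        · exact h'
      have hwa : (w.1.1.1 - 1).natAbs < (v.1.1.1 - 1).natAbs := by
        rcases hfw' with h' | ⟨-, h'⟩
        · have := qpos w; omega
        · exact h'
      rw [hq1, hu1] at d1
      rw [hq1, hw1] at d2
      have := podd v
      have hpu : u.1.1.1 = w.1.1.1 := by omega
      exact Subtype.ext (Subtype.ext (Prod.ext hpu (by rw [hu1, hw1])))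
    · have hq3 : 3 ≤ v.1.1.2 := by have := qodd v; have := qpos v; omega
      have hult : u.1.1.2 < v.1.1.2 := by
        rcases hfu' with h' | ⟨h', -⟩
        · have := qpos u; have := qpos v; omega
        · exfalso
          have hz : u.1.1.2 = v.1.1.2 := by have := qpos u; have := qpos v; omega
          have := Int.le_of_dvd (by norm_num) (hqeqdvd u d1 hz)
          omega
      have hwlt : w.1.1.2 < v.1.1.2 := by
        rcases hfw' with h' | ⟨h', -⟩
        · have := qpos w; have := qpos v; omega
        · exfalso
          have hz : w.1.1.2 = v.1.1.2 := by have := qpos w; have := qpos v; omega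
          have := Int.le_of_dvd (by norm_num) (hqeqdvd w d2 hz)
          omega
      rcases core_uniq v.1.2.1 d1 d2 (qpos u).le hult (qpos w).le hwlt with
        ⟨hs, hr⟩ | ⟨h1, h2⟩ | ⟨hsum, -⟩
      · exact Subtype.ext (Subtype.ext (Prod.ext hr hs))
      · exact absurd h1 (by have := qpos u; omega)
      · exfalso
        have := qodd u; have := qodd w; have := qodd v
        omega

/-- `W̄` is a forest with exactly three connected components: its vertex set is the
disjoint union of the parity classes `W₀, W₁, W₂`, there are no edges between distinct
classes, and each induced subgraph `W̄ᵢ` is a tree (connected and acyclic). -/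
theorem Wbar_forest_three_trees :
    (∀ v : NPP,
      (v ∈ W0 ∧ v ∉ W1 ∧ v ∉ W2) ∨ (v ∈ W1 ∧ v ∉ W0 ∧ v ∉ W2) ∨
        (v ∈ W2 ∧ v ∉ W0 ∧ v ∉ W1)) ∧
    (∀ u v : NPP, Wbar.Adj u v →
      ((u ∈ W0 ∧ v ∈ W0) ∨ (u ∈ W1 ∧ v ∈ W1) ∨ (u ∈ W2 ∧ v ∈ W2))) ∧
    ((SimpleGraph.induce W0 Wbar).Connected ∧ (SimpleGraph.induce W0 Wbar).IsAcyclic) ∧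
    ((SimpleGraph.induce W1 Wbar).Connected ∧ (SimpleGraph.induce W1 Wbar).IsAcyclic) ∧
    ((SimpleGraph.induce W2 Wbar).Connected ∧ (SimpleGraph.induce W2 Wbar).IsAcyclic) := by
  exact ⟨part1, part2, W0_tree, W1_tree, W2_tree⟩
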